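/- arXiv:2202.04714 — 2 statements merged into one kernel-verified Lean document; each statement's English description precedes it below -/
import Mathlib

section
/- If u, v ∈ M_n(ℂ) are unitaries satisfying the trace-orthogonality Tr(u^* v) = 0, then the projections P(u) = ∑_{i,j} E_{i,j} ⊗ (1/n) u^* E_{i,j} u and P(v) = ∑_{i,j} E_{i,j} ⊗ (1/n) v^* E_{i,j} v in M_n(ℂ) ⊗ M_n(ℂ) are mutually orthogonal: P(u)·P(v) = 0. -/
open Matrix Kronecker

noncomputable def Pproj (n : ℕ) (u : Matrix (Fin n) (Fin n) ℂ) :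
    Matrix (Fin n × Fin n) (Fin n × Fin n) ℂ :=
  ∑ i : Fin n, ∑ j : Fin n,
    (Matrix.single i j (1 : ℂ)) ⊗ₖ
      ((1 / (n : ℂ)) • (star u * Matrix.single i j (1 : ℂ) * u))

lemma Pproj_apply (n : ℕ) (u : Matrix (Fin n) (Fin n) ℂ) (p q : Fin n × Fin n) :
    Pproj n u p q = (1 / (n : ℂ)) * star (u p.1 p.2) * u q.1 q.2 := by
  unfold Pproj
  simp [Matrix.sum_apply, kroneckerMap_apply, Matrix.single, Matrix.mul_apply,
    Finset.sum_mul, Finset.mul_sum, ite_and, Matrix.conjTranspose_apply]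
  ring

/-- If `u, v` are unitaries with `Tr(u^* v) = 0`, then `P(u)·P(v) = 0`. -/
theorem Pproj_orthogonal (n : ℕ) [NeZero n] (u v : Matrix (Fin n) (Fin n) ℂ)
    (hu : u ∈ Matrix.unitaryGroup (Fin n) ℂ)
    (hv : v ∈ Matrix.unitaryGroup (Fin n) ℂ)
    (horth : Matrix.trace (star u * v) = 0) :
    Pproj n u * Pproj n v = 0 := by
  have key : ∑ r : Fin n × Fin n, u r.1 r.2 * star (v r.1 r.2) = 0 := by
    have h := congrArg star horth
    rw [star_zero] at h
    rw [← h]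
    simp only [Matrix.trace, Matrix.diag, Matrix.mul_apply, Matrix.conjTranspose_apply,
      star_sum, star_mul', star_star, Fintype.sum_prod_type]
    rw [Finset.sum_comm]
    simp [mul_comm]
  ext p q
  rw [Matrix.mul_apply]
  simp only [Pproj_apply, Matrix.zero_apply]
  calc ∑ r : Fin n × Fin n,
        (1 / (n : ℂ)) * star (u p.1 p.2) * u r.1 r.2 *
          ((1 / (n : ℂ)) * star (v r.1 r.2) * v q.1 q.2)
      = ((1 / (n : ℂ)) * star (u p.1 p.2) * ((1 / (n : ℂ)) * v q.1 q.2)) *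
          ∑ r : Fin n × Fin n, u r.1 r.2 * star (v r.1 r.2) := by
        rw [Finset.mul_sum]; exact Finset.sum_congr rfl fun r _ => by ring
    _ = 0 := by rw [key, mul_zero]
end

section
/- Let H be a subgroup of finite index in a free group G of finite rank r(G). Then H is free and its rank satisfies r(H) − 1 = [G : H]·(r(G) − 1) (the Nielsen–Schreier index formula). -/
noncomputable section
open scoped Classical
open CategoryTheory CategoryTheory.ActionCategory CategoryTheory.SingleObj Quiver FreeGroup
open IsFreeGroupoid IsFreeGroupoid.SpanningTree

namespace NSAux

universe u v

/-! ### Counting edges of an arborescence -/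

section Tree

variable {V : Type u} [Quiver.{u} V] (T : WideSubquiver (Symmetrify V)) [Arborescence T]

/-- The set of arrows of `V` belonging (in either orientation) to the tree. -/
def treeSet : Set (Total V) := { x | x.hom ∈ wideSubquiverSymmetrify T x.left x.right }

lemma default_cons {a b : T} (e : a ⟶ b) :
    (default : Path (Quiver.root T) b) = (default : Path (Quiver.root T) a).cons e :=
  (Unique.uniq _ _).symm

lemma length_succ {a b : T} (e : a ⟶ b) :
    (default : Path (Quiver.root T) b).length
      = (default : Path (Quiver.root T) a).length + 1 := by
  rw [default_cons T e]; rfl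

lemma no_edge_into_root {a : T} (e : a ⟶ Quiver.root T) : False := by
  have h : (Path.nil : Path (Quiver.root T) (Quiver.root T))
      = (default : Path (Quiver.root T) a).cons e := Subsingleton.elim _ _
  exact Path.nil_ne_cons _ _ h

/-- The last edge of the canonical path to a non-root vertex, as an arrow of `V`
belonging to the tree. -/
def lastEdge : ∀ {b : T}, Path (Quiver.root T) b → b ≠ Quiver.root T → ↥(treeSet T)
  | _, Path.nil, h => absurd rfl h
  | b, Path.cons (b := c) _ ⟨Sum.inl g, hg⟩, _ =>
      ⟨⟨show V from c, show V from b, g⟩, Or.inl hg⟩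
  | b, Path.cons (b := c) _ ⟨Sum.inr g, hg⟩, _ =>
      ⟨⟨show V from b, show V from c, g⟩, Or.inr hg⟩

def treeEquivFun : {b : T // b ≠ Quiver.root T} → ↥(treeSet T) :=
  fun p => lastEdge T default p.2

lemma treeEquivFun_bijective : Function.Bijective (treeEquivFun T) := by
  constructor
  · rintro ⟨b, hb⟩ ⟨b', hb'⟩ h
    simp only [treeEquivFun] at h
    cases hp : (default : Path (Quiver.root T) b) with
    | nil => exact absurd rfl hb
    | cons q e =>
      rename_i c
      cases hp' : (default : Path (Quiver.root T) b') with
      | nil => exact absurd rfl hb'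
      | cons q' e' =>
        rename_i c'
        have l1 := length_succ T e
        have l2 := length_succ T e'
        rw [hp, hp'] at h
        obtain ⟨g | g, hg⟩ := e <;> obtain ⟨g' | g', hg'⟩ := e' <;>
          simp only [lastEdge, Subtype.ext_iff, Total.mk.injEq] at h <;> replace h := Total.mk.inj h
        · exact Subtype.ext h.2.1
        · exfalso
          have hc : c = b' := h.1
          have hb2 : b = c' := h.2.1
          rw [← hc] at l2
          rw [← hb2] at l2
          omega
        · exfalso
          have hc : c = b' := h.2.1
          have hb2 : b = c' := h.1
          rw [← hc] at l2
          rw [← hb2] at l2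
          omega
        · exact Subtype.ext h.1
  · rintro ⟨⟨A, B, g⟩, hABg⟩
    rcases hABg with hg | hg
    · refine ⟨⟨show T from B, fun h => no_edge_into_root T
        (h ▸ (⟨Sum.inl g, hg⟩ : (show T from A) ⟶ (show T from B)))⟩, ?_⟩
      show lastEdge T default _ = _
      rw [default_cons T (⟨Sum.inl g, hg⟩ : (show T from A) ⟶ (show T from B))]
      rfl
    · refine ⟨⟨show T from A, fun h => no_edge_into_root T
        (h ▸ (⟨Sum.inr g, hg⟩ : (show T from B) ⟶ (show T from A)))⟩, ?_⟩
      show lastEdge T default _ = _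
      rw [default_cons T (⟨Sum.inr g, hg⟩ : (show T from B) ⟶ (show T from A))]
      rfl

/-- Tree edges are in bijection with non-root vertices. -/
def treeEquiv : {b : T // b ≠ Quiver.root T} ≃ ↥(treeSet T) :=
  Equiv.ofBijective _ (treeEquivFun_bijective T)

end Tree

/-! ### A concrete free group basis for the vertex group at the root -/

section Basis

variable {G : Type u} [Groupoid.{u} G] [IsFreeGroupoid G]
  (T : WideSubquiver (Symmetrify <| IsFreeGroupoid.Generators G)) [Arborescence T]

/-- The root of `T`, except its type is `G` instead of the type synonym `T`. -/
def root'' : G := show T from Quiver.root T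

lemma treeHom_root'' : treeHom T (root'' T) = 𝟙 (root'' T) :=
  treeHom_root T

/-- The free group basis on the vertex group at the root, indexed by the generating
arrows outside the spanning tree.  This is extracted from the proof of
`IsFreeGroupoid.SpanningTree.endIsFree` in Mathlib. -/
def endBasis :
    FreeGroupBasis ((wideSubquiverEquivSetTotal <| wideSubquiverSymmetrify T)ᶜ : Set _)
      (End (root'' T)) :=
  FreeGroupBasis.ofUniqueLift ((wideSubquiverEquivSetTotal <| wideSubquiverSymmetrify T)ᶜ : Set _)
    (fun e => loopOfHom T (of e.val.hom))
    (by
      intro X _ f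
      let f' : Labelling (IsFreeGroupoid.Generators G) X := fun a b e =>
        if h : e ∈ wideSubquiverSymmetrify T a b then 1 else f ⟨⟨a, b, e⟩, h⟩
      rcases unique_lift f' with ⟨F', hF', uF'⟩
      refine ⟨F'.mapEnd _, ?_, ?_⟩
      · suffices ∀ {x y} (q : x ⟶ y), F'.map (loopOfHom T q) = (F'.map q : X) by
          rintro ⟨⟨a, b, e⟩, h⟩
          erw [Functor.mapEnd_apply, this, hF']
          exact dif_neg h
        intros x y q
        suffices ∀ {a} (p : Path (Quiver.root T) a), F'.map (homOfPath T p) = 1 by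
          simp only [this, treeHom, comp_as_mul, inv_as_inv, loopOfHom, inv_one, mul_one,
            one_mul, Functor.map_inv, Functor.map_comp]
          erw [this, this]; simp only [inv_one, one_mul, mul_one]
        intro a p
        induction' p with b c p e ih
        · exact F'.map_id _
        erw [homOfPath.eq_2, F'.map_comp, comp_as_mul, ih, mul_one]
        rcases e with ⟨e | e, eT⟩
        · refine (hF' _ _ e).trans ?_
          exact dif_pos (Or.inl eT)
        · dsimp only; erw [F'.map_inv, inv_as_inv, inv_eq_one, hF']
          exact dif_pos (Or.inr eT)
      · intro E hE
        ext x
        suffices h2 : (functorOfMonoidHom T E).map x = F'.map x by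
          have h1 : loopOfHom T x = x := by
            show treeHom T _ ≫ x ≫ inv (treeHom T _) = x
            rw [treeHom_root'']
            erw [IsIso.inv_id, Category.id_comp, Category.comp_id]
          exact (congrArg E h1).symm.trans h2
        congr
        apply uF'
        intro a b e
        change E (loopOfHom T _) = dite _ _ _
        split_ifs with h
        · rw [loopOfHom_eq_id T e h, ← End.one_def]; exact E.map_one
        · exact hE ⟨⟨a, b, e⟩, h⟩)

end Basis

/-! ### The action groupoid of `G` on `G ⧸ H` -/

section Count

variable (G : Type u) [Group G] [IsFreeGroup G] (A : Type u) [MulAction G A]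

/-- The arrows of the generating quiver of the action groupoid are in bijection with
pairs (point, generator). -/
def totalEquiv :
    Total (IsFreeGroupoid.Generators (ActionCategory G A)) ≃ A × (IsFreeGroup.Generators G) where
  toFun x := ⟨ActionCategory.back (show ActionCategory G A from x.left), x.hom.val⟩
  invFun p := ⟨(objEquiv G A p.1 : ActionCategory G A),
    (objEquiv G A (IsFreeGroup.of p.2 • p.1) : ActionCategory G A), ⟨p.2, rfl⟩⟩
  left_inv := by
    rintro ⟨⟨⟨⟩, (a : A)⟩, ⟨⟨⟩, (b : A)⟩, e, he⟩
    obtain rfl : IsFreeGroup.of e • a = b := he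
    rfl
  right_inv := fun p => rfl

end Count

section Part3

variable (G : Type) [Group G] [IsFreeGroup G] (H : Subgroup G)

/-- The base vertex in the action groupoid of `G` on `G ⧸ H`, as a vertex of the
symmetrified generating quiver. -/
def rootVertex : Symmetrify (IsFreeGroupoid.Generators (ActionCategory G (G ⧸ H))) :=
  show ActionCategory G (G ⧸ H) from objEquiv G (G ⧸ H) ↑(1 : G)

instance : RootedConnected (rootVertex G H) :=
  ⟨fun b => path_nonempty_of_hom (@CategoryTheory.nonempty_hom_of_preconnected_groupoid _ _
    (show CategoryTheory.IsPreconnected (ActionCategory G (G ⧸ H)) from inferInstance)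
    (objEquiv G (G ⧸ H) ↑(1 : G))
    (show ActionCategory G (G ⧸ H) from b))⟩

/-- The geodesic spanning tree of the action groupoid. -/
def theTree : WideSubquiver (Symmetrify (IsFreeGroupoid.Generators (ActionCategory G (G ⧸ H)))) :=
  geodesicSubtree (rootVertex G H)

instance : Arborescence (theTree G H) := geodesicArborescence (rootVertex G H)

/-- A concrete free group basis for a subgroup of a free group: it is indexed by the
generating arrows of the action groupoid lying outside the spanning tree. -/
def theBasis : FreeGroupBasis ↥((treeSet (theTree G H))ᶜ) H :=
  (endBasis (theTree G H)).map (endMulEquivSubgroup H)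

end Part3

end NSAux

end

/-- Nielsen–Schreier with the index formula: a finite index subgroup `H` of a free
group `G` of finite rank is free, with `r(H) - 1 = [G : H]·(r(G) - 1)`. -/
theorem nielsen_schreier_index_formula (G : Type) [Group G] [IsFreeGroup G]
    [Fintype (IsFreeGroup.Generators G)] (H : Subgroup G) (hH : H.FiniteIndex) :
    ∃ (ι : Type) (_ : Fintype ι) (_ : FreeGroupBasis ι H),
      (Nat.card ι : ℤ) - 1 =
        (H.index : ℤ) * ((Nat.card (IsFreeGroup.Generators G) : ℤ) - 1) := by
  classical
  haveI : Finite (G ⧸ H) := Nat.finite_of_card_ne_zero hH.index_ne_zero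
  set Γ := CategoryTheory.ActionCategory G (G ⧸ H) with hΓdef
  haveI : Finite Γ := Finite.of_equiv _ (CategoryTheory.ActionCategory.objEquiv G (G ⧸ H))
  set T := NSAux.theTree G H with hTdef
  haveI : Finite (Quiver.Total (IsFreeGroupoid.Generators Γ)) :=
    Finite.of_equiv _ (NSAux.totalEquiv G (G ⧸ H)).symm
  set ι := (↥((NSAux.treeSet T)ᶜ) : Type) with hιdef
  haveI : Finite ι := Subtype.finite
  refine ⟨ι, Fintype.ofFinite ι, NSAux.theBasis G H, ?_⟩
  -- counting
  have hA : Nat.card (G ⧸ H) = H.index := rfl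
  have hvert : Nat.card Γ = H.index := by
    rw [Nat.card_congr (CategoryTheory.ActionCategory.objEquiv G (G ⧸ H)).symm]
    rfl
  have htot : Nat.card (Quiver.Total (IsFreeGroupoid.Generators Γ))
      = H.index * Nat.card (IsFreeGroup.Generators G) := by
    rw [Nat.card_congr (NSAux.totalEquiv G (G ⧸ H)), Nat.card_prod, hA]
  have hsplit : Nat.card (Quiver.Total (IsFreeGroupoid.Generators Γ))
      = Nat.card ↥(NSAux.treeSet T) + Nat.card ι := by
    rw [← Nat.card_sum]
    exact (Nat.card_congr (Equiv.sumCompl (· ∈ NSAux.treeSet T))).symm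
  have htree : Nat.card ↥(NSAux.treeSet T)
      = Nat.card {b : T // b ≠ Quiver.root T} :=
    (Nat.card_congr (NSAux.treeEquiv T)).symm
  haveI : Unique {b : T // b = Quiver.root T} :=
    ⟨⟨⟨Quiver.root T, rfl⟩⟩, by rintro ⟨b, rfl⟩; rfl⟩
  haveI : Finite (WideSubquiver.toType
      (Quiver.Symmetrify (IsFreeGroupoid.Generators Γ)) T) := ‹Finite Γ›
  have hvert2 : Nat.card Γ = 1 + Nat.card {b : T // b ≠ Quiver.root T} := by
    have h3 : Nat.card Γ
        = Nat.card ({b : T // b = Quiver.root T} ⊕ {b : T // ¬ b = Quiver.root T}) :=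
      (Nat.card_congr (Equiv.sumCompl (fun b : T => b = Quiver.root T))).symm
    have h4 : Nat.card {b : T // b = Quiver.root T} = 1 := Nat.card_unique
    rw [Nat.card_sum, h4] at h3
    exact h3
  -- put everything together over ℤ
  have key : Nat.card ι + (1 + Nat.card {b : T // b ≠ Quiver.root T})
      = H.index * Nat.card (IsFreeGroup.Generators G) + 1 := by omega
  have hfin : (Nat.card ι : ℤ) + (H.index : ℤ)
      = (H.index : ℤ) * (Nat.card (IsFreeGroup.Generators G) : ℤ) + 1 := by
    rw [← hvert2, hvert] at key
    exact_mod_cast congrArg (Nat.cast : ℕ → ℤ) key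
  have : (H.index : ℤ) * ((Nat.card (IsFreeGroup.Generators G) : ℤ) - 1)
      = (H.index : ℤ) * (Nat.card (IsFreeGroup.Generators G) : ℤ) - (H.index : ℤ) := by ring
  rw [this]
  linarith [hfin]
end
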